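/- Let μ be the probability measure on 𝒳 × 𝒳 × 𝒳 obtained by drawing X ∼ π and then Y and Z independently from κ(X,·) (i.e., μ(dx,dy,dz) = π(dx) κ(x,dy) κ(x,dz)), and let C be a nonempty closed convex subset of L²(π) with metric projection Π_C. Then for every measurable V : 𝒳 → ℝ with ∫ V² dπ < ∞, the projection Π_C(TV) is the unique minimizer over φ ∈ C of the functional φ ↦ ∫ ( r(x) + (α/2)(V(y) + V(z)) − φ(x) )² μ(dx,dy,dz). -/

import Mathlib

open MeasureTheory ProbabilityTheory
open scoped ProbabilityTheory ENNReal NNReal RealInnerProductSpace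

private lemma aux_abs_mul_le_half_sq (a b : ℝ) : ‖a * b‖ ≤ (a ^ 2 + b ^ 2) / 2 := by
  rw [Real.norm_eq_abs, abs_mul]
  nlinarith [sq_nonneg (|a| - |b|), sq_abs a, sq_abs b, abs_nonneg a, abs_nonneg b]

/-- With `μ(dx,dy,dz) = π(dx) κ(x,dy) κ(x,dz)` and `C` a nonempty closed convex subset of
`L²(π)` with metric projection `P`, for every `V ∈ L²(π)` the projection `P(TV)` of
`TV = r + α ∫ V(y) κ(·,dy)` is the unique minimizer over `φ ∈ C` of
`φ ↦ ∫ (r(x) + (α/2)(V(y)+V(z)) − φ(x))² dμ`. -/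
theorem projection_of_bellman_is_two_copy_least_squares
    {𝒳 : Type*} [MeasurableSpace 𝒳]
    (κ : Kernel 𝒳 𝒳) [IsMarkovKernel κ]
    (π : Measure 𝒳) [IsProbabilityMeasure π]
    (hinv : ∀ B : Set 𝒳, MeasurableSet B → π B = ∫⁻ x, κ x B ∂π)
    (α : ℝ) (hα0 : 0 < α) (hα1 : α < 1)
    (r : 𝒳 → ℝ) (hr : Measurable r)
    (hr2 : Integrable (fun x => r x ^ 2) π)
    (C : Set (Lp ℝ 2 π)) (hCne : C.Nonempty) (hCclosed : IsClosed C) (hCconvex : Convex ℝ C)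
    (P : Lp ℝ 2 π → Lp ℝ 2 π)
    (hP : ∀ y : Lp ℝ 2 π, P y ∈ C ∧ ∀ q ∈ C, ‖y - P y‖ ≤ ‖y - q‖)
    (V : 𝒳 → ℝ) (hV : Measurable V) (hV2 : Integrable (fun x => V x ^ 2) π)
    (TV : Lp ℝ 2 π)
    (hTV : (TV : 𝒳 → ℝ) =ᵐ[π] fun x => r x + α * ∫ y, V y ∂(κ x)) :
    P TV ∈ C ∧
      (∀ φ ∈ C,
        ∫ p, (r p.1 + (α / 2) * (V p.2.1 + V p.2.2) - (P TV : 𝒳 → ℝ) p.1) ^ 2 ∂(π ⊗ₘ (κ ×ₖ κ))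
          ≤ ∫ p, (r p.1 + (α / 2) * (V p.2.1 + V p.2.2) - (φ : 𝒳 → ℝ) p.1) ^ 2
              ∂(π ⊗ₘ (κ ×ₖ κ))) ∧
      (∀ φ ∈ C,
        (∫ p, (r p.1 + (α / 2) * (V p.2.1 + V p.2.2) - (φ : 𝒳 → ℝ) p.1) ^ 2 ∂(π ⊗ₘ (κ ×ₖ κ)))
          ≤ ∫ p, (r p.1 + (α / 2) * (V p.2.1 + V p.2.2) - (P TV : 𝒳 → ℝ) p.1) ^ 2
              ∂(π ⊗ₘ (κ ×ₖ κ)) → φ = P TV) := by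
  classical
  set μ : Measure (𝒳 × 𝒳 × 𝒳) := π ⊗ₘ (κ ×ₖ κ) with hμdef
  set tv : 𝒳 → ℝ := (TV : 𝒳 → ℝ) with htvdef
  have htvsm : StronglyMeasurable tv := Lp.stronglyMeasurable TV
  have hbind : π.bind (fun x => κ x) = π := by
    ext B hB
    rw [Measure.bind_apply hB κ.measurable.aemeasurable]
    exact (hinv B hB).symm
  have mp1 : MeasurePreserving (Prod.fst : 𝒳 × 𝒳 × 𝒳 → 𝒳) μ π := by
    refine ⟨measurable_fst, ?_⟩
    have h : μ.fst = π := Measure.fst_compProd π (κ ×ₖ κ)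
    simpa [Measure.fst] using h
  have mp2 : MeasurePreserving (fun p : 𝒳 × 𝒳 × 𝒳 => p.2.1) μ π := by
    have hm : Measurable (fun p : 𝒳 × 𝒳 × 𝒳 => p.2.1) := measurable_fst.comp measurable_snd
    refine ⟨hm, ?_⟩
    ext B hB
    rw [Measure.map_apply hm hB]
    have hpre : (fun p : 𝒳 × 𝒳 × 𝒳 => p.2.1) ⁻¹' B
        = (Set.univ : Set 𝒳) ×ˢ (B ×ˢ (Set.univ : Set 𝒳)) := by ext p; simp
    rw [hpre, hμdef,
      Measure.compProd_apply ((MeasurableSet.univ).prod (hB.prod MeasurableSet.univ))]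
    have hx : ∀ x, (κ ×ₖ κ) x
        (Prod.mk x ⁻¹' ((Set.univ : Set 𝒳) ×ˢ (B ×ˢ (Set.univ : Set 𝒳)))) = κ x B := by
      intro x
      have h1 : Prod.mk x ⁻¹' ((Set.univ : Set 𝒳) ×ˢ (B ×ˢ (Set.univ : Set 𝒳)))
          = B ×ˢ (Set.univ : Set 𝒳) := by ext w; simp
      rw [h1, Kernel.prod_apply, Measure.prod_prod]; simp
    simp_rw [hx]
    exact (hinv B hB).symm
  have mp3 : MeasurePreserving (fun p : 𝒳 × 𝒳 × 𝒳 => p.2.2) μ π := by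
    have hm : Measurable (fun p : 𝒳 × 𝒳 × 𝒳 => p.2.2) := measurable_snd.comp measurable_snd
    refine ⟨hm, ?_⟩
    ext B hB
    rw [Measure.map_apply hm hB]
    have hpre : (fun p : 𝒳 × 𝒳 × 𝒳 => p.2.2) ⁻¹' B
        = (Set.univ : Set 𝒳) ×ˢ ((Set.univ : Set 𝒳) ×ˢ B) := by ext p; simp
    rw [hpre, hμdef,
      Measure.compProd_apply ((MeasurableSet.univ).prod (MeasurableSet.univ.prod hB))]
    have hx : ∀ x, (κ ×ₖ κ) x
        (Prod.mk x ⁻¹' ((Set.univ : Set 𝒳) ×ˢ ((Set.univ : Set 𝒳) ×ˢ B))) = κ x B := by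
      intro x
      have h1 : Prod.mk x ⁻¹' ((Set.univ : Set 𝒳) ×ˢ ((Set.univ : Set 𝒳) ×ˢ B))
          = (Set.univ : Set 𝒳) ×ˢ B := by ext w; simp
      rw [h1, Kernel.prod_apply, Measure.prod_prod]; simp
    simp_rw [hx]
    exact (hinv B hB).symm
  have hVm : MemLp V 2 π := (memLp_two_iff_integrable_sq hV.aestronglyMeasurable).2 hV2
  have hrm : MemLp r 2 π := (memLp_two_iff_integrable_sq hr.aestronglyMeasurable).2 hr2
  have htvm : MemLp tv 2 π := Lp.memLp TV
  have haeInt : ∀ᵐ x ∂π, Integrable V (κ x) := by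
    have hmeas2 : Measurable fun y => ((‖V y‖₊ : ℝ≥0∞)) ^ 2 :=
      (hV.nnnorm.coe_nnreal_ennreal).pow_const 2
    have hfin : ∫⁻ x, ∫⁻ y, ((‖V y‖₊ : ℝ≥0∞)) ^ 2 ∂κ x ∂π < ⊤ := by
      have h1 : ∫⁻ y, ((‖V y‖₊ : ℝ≥0∞)) ^ 2 ∂(π.bind (fun x => κ x))
          = ∫⁻ x, ∫⁻ y, ((‖V y‖₊ : ℝ≥0∞)) ^ 2 ∂κ x ∂π :=
        Measure.lintegral_bind κ.measurable.aemeasurable hmeas2.aemeasurable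
      rw [← h1, hbind]
      have h2 : ∫⁻ y, ((‖V y‖₊ : ℝ≥0∞)) ^ 2 ∂π = ∫⁻ y, (‖V y ^ 2‖₊ : ℝ≥0∞) ∂π := by
        congr 1; ext y
        rw [← ENNReal.coe_pow]
        congr 1
        simpa using (nnnorm_pow (V y) 2).symm
      rw [h2]
      exact hV2.2
    have hml : Measurable fun x => ∫⁻ y, ((‖V y‖₊ : ℝ≥0∞)) ^ 2 ∂κ x :=
      Measurable.lintegral_kernel_prod_right (hmeas2.comp measurable_snd)
    filter_upwards [ae_lt_top hml hfin.ne] with x hx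
    have hsq : HasFiniteIntegral (fun y => V y ^ 2) (κ x) := by
      show (∫⁻ y, (‖V y ^ 2‖₊ : ℝ≥0∞) ∂κ x) < ⊤
      have h2 : ∫⁻ y, (‖V y ^ 2‖₊ : ℝ≥0∞) ∂κ x = ∫⁻ y, ((‖V y‖₊ : ℝ≥0∞)) ^ 2 ∂κ x := by
        congr 1; ext y
        rw [← ENNReal.coe_pow]
        congr 1
        simpa using nnnorm_pow (V y) 2
      rw [h2]; exact hx
    have hmlp : MemLp V 2 (κ x) :=
      (memLp_two_iff_integrable_sq hV.aestronglyMeasurable).2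
        ⟨(hV.pow_const 2).aestronglyMeasurable, hsq⟩
    exact hmlp.integrable one_le_two
  have key : ∀ f : 𝒳 → ℝ, MemLp f 2 π →
      ∫ p, (r p.1 + (α / 2) * (V p.2.1 + V p.2.2) - f p.1) ^ 2 ∂μ
        = (∫ p, (r p.1 + (α / 2) * (V p.2.1 + V p.2.2) - tv p.1) ^ 2 ∂μ)
          + ∫ x, (tv x - f x) ^ 2 ∂π := by
    intro f hfm
    have hAm : MemLp (fun p : 𝒳 × 𝒳 × 𝒳 =>
        r p.1 + (α / 2) * (V p.2.1 + V p.2.2) - tv p.1) 2 μ :=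
      ((hrm.comp_measurePreserving mp1).add
        (((hVm.comp_measurePreserving mp2).add (hVm.comp_measurePreserving mp3)).const_mul
          (α / 2))).sub (htvm.comp_measurePreserving mp1)
    have hBm : MemLp (fun p : 𝒳 × 𝒳 × 𝒳 => tv p.1 - f p.1) 2 μ :=
      (htvm.comp_measurePreserving mp1).sub (hfm.comp_measurePreserving mp1)
    have hA2 : Integrable (fun p : 𝒳 × 𝒳 × 𝒳 =>
        (r p.1 + (α / 2) * (V p.2.1 + V p.2.2) - tv p.1) ^ 2) μ := hAm.integrable_sq
    have hB2 : Integrable (fun p : 𝒳 × 𝒳 × 𝒳 => (tv p.1 - f p.1) ^ 2) μ := hBm.integrable_sq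
    have hAB : Integrable (fun p : 𝒳 × 𝒳 × 𝒳 =>
        (r p.1 + (α / 2) * (V p.2.1 + V p.2.2) - tv p.1) * (tv p.1 - f p.1)) μ := by
      refine Integrable.mono' ((hA2.add hB2).div_const 2) (hAm.1.mul hBm.1) ?_
      filter_upwards with p
      exact aux_abs_mul_le_half_sq _ _
    have hcross : ∫ p, (r p.1 + (α / 2) * (V p.2.1 + V p.2.2) - tv p.1) * (tv p.1 - f p.1) ∂μ
        = 0 := by
      rw [hμdef, Measure.integral_compProd (hμdef ▸ hAB)]
      refine integral_eq_zero_of_ae ?_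
      filter_upwards [haeInt, hTV] with x hVx htvx
      have mpfst : MeasurePreserving (Prod.fst : 𝒳 × 𝒳 → 𝒳) ((κ x).prod (κ x)) (κ x) :=
        ⟨measurable_fst, by simp⟩
      have mpsnd : MeasurePreserving (Prod.snd : 𝒳 × 𝒳 → 𝒳) ((κ x).prod (κ x)) (κ x) :=
        ⟨measurable_snd, by simp⟩
      have h1 : Integrable (fun w : 𝒳 × 𝒳 => V w.1) ((κ x).prod (κ x)) :=
        memLp_one_iff_integrable.1
          ((memLp_one_iff_integrable.2 hVx).comp_measurePreserving mpfst)
      have h2 : Integrable (fun w : 𝒳 × 𝒳 => V w.2) ((κ x).prod (κ x)) :=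
        memLp_one_iff_integrable.1
          ((memLp_one_iff_integrable.2 hVx).comp_measurePreserving mpsnd)
      have e1 : ∫ w : 𝒳 × 𝒳, V w.1 ∂((κ x).prod (κ x)) = ∫ y, V y ∂κ x := by
        have hasmf : AEStronglyMeasurable V (Measure.map Prod.fst ((κ x).prod (κ x))) := by
          rw [mpfst.map_eq]; exact hV.aestronglyMeasurable
        have h := integral_map (φ := (Prod.fst : 𝒳 × 𝒳 → 𝒳)) (f := V)
          measurable_fst.aemeasurable hasmf
        rw [mpfst.map_eq] at h
        exact h.symm
      have e2 : ∫ w : 𝒳 × 𝒳, V w.2 ∂((κ x).prod (κ x)) = ∫ y, V y ∂κ x := by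
        have hasms : AEStronglyMeasurable V (Measure.map Prod.snd ((κ x).prod (κ x))) := by
          rw [mpsnd.map_eq]; exact hV.aestronglyMeasurable
        have h := integral_map (φ := (Prod.snd : 𝒳 × 𝒳 → 𝒳)) (f := V)
          measurable_snd.aemeasurable hasms
        rw [mpsnd.map_eq] at h
        exact h.symm
      have hsum : Integrable (fun w : 𝒳 × 𝒳 => V w.1 + V w.2) ((κ x).prod (κ x)) := h1.add h2
      have hsum' : Integrable (fun w : 𝒳 × 𝒳 => (α / 2) * (V w.1 + V w.2))
          ((κ x).prod (κ x)) := hsum.const_mul _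
      have hg1 : Integrable (fun w : 𝒳 × 𝒳 =>
          r x + (α / 2) * (V w.1 + V w.2)) ((κ x).prod (κ x)) :=
        (integrable_const _).add hsum'
      have hη : (κ ×ₖ κ) x = (κ x).prod (κ x) := Kernel.prod_apply κ κ x
      show (∫ w : 𝒳 × 𝒳,
          (r (x, w).1 + (α / 2) * (V (x, w).2.1 + V (x, w).2.2) - tv (x, w).1)
            * (tv (x, w).1 - f (x, w).1) ∂((κ ×ₖ κ) x)) = 0
      rw [hη]
      have hw : ∀ w : 𝒳 × 𝒳,
          (r (x, w).1 + (α / 2) * (V (x, w).2.1 + V (x, w).2.2) - tv (x, w).1)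
            * (tv (x, w).1 - f (x, w).1)
          = (r x + (α / 2) * (V w.1 + V w.2) - tv x) * (tv x - f x) := fun w => rfl
      have hmean : ∫ w : 𝒳 × 𝒳, (r x + (α / 2) * (V w.1 + V w.2) - tv x)
          ∂((κ x).prod (κ x)) = 0 := by
        rw [integral_sub hg1 (integrable_const _),
          integral_add (integrable_const _) hsum',
          integral_const_mul, integral_add h1 h2, e1, e2, integral_const, integral_const]
        simp only [measure_univ, probReal_univ, ENNReal.toReal_one, smul_eq_mul, one_mul]
        have htv' : tv x = r x + α * ∫ y, V y ∂κ x := htvx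
        rw [htv']; ring
      show (∫ w : 𝒳 × 𝒳, (r x + (α / 2) * (V w.1 + V w.2) - tv x) * (tv x - f x)
        ∂((κ x).prod (κ x))) = 0
      rw [integral_mul_const, hmean, zero_mul]
    have hsplit : (fun p : 𝒳 × 𝒳 × 𝒳 => (r p.1 + (α / 2) * (V p.2.1 + V p.2.2) - f p.1) ^ 2)
        = fun p => (r p.1 + (α / 2) * (V p.2.1 + V p.2.2) - tv p.1) ^ 2
          + (2 * ((r p.1 + (α / 2) * (V p.2.1 + V p.2.2) - tv p.1) * (tv p.1 - f p.1))
            + (tv p.1 - f p.1) ^ 2) := by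
      funext p; ring
    have hAB2 : Integrable (fun p : 𝒳 × 𝒳 × 𝒳 =>
        2 * ((r p.1 + (α / 2) * (V p.2.1 + V p.2.2) - tv p.1) * (tv p.1 - f p.1))) μ :=
      hAB.const_mul 2
    have hrest : Integrable (fun p : 𝒳 × 𝒳 × 𝒳 =>
        2 * ((r p.1 + (α / 2) * (V p.2.1 + V p.2.2) - tv p.1) * (tv p.1 - f p.1))
          + (tv p.1 - f p.1) ^ 2) μ := hAB2.add hB2
    rw [hsplit, integral_add hA2 hrest, integral_add hAB2 hB2, integral_const_mul, hcross,
      mul_zero, zero_add]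
    congr 1
    have hasm : AEStronglyMeasurable (fun x => (tv x - f x) ^ 2) π :=
      ((htvm.aestronglyMeasurable.sub hfm.aestronglyMeasurable).aemeasurable.pow_const
        2).aestronglyMeasurable
    have hasm2 : AEStronglyMeasurable (fun x => (tv x - f x) ^ 2) (Measure.map Prod.fst μ) := by
      rw [mp1.map_eq]; exact hasm
    have h := integral_map (φ := (Prod.fst : 𝒳 × 𝒳 × 𝒳 → 𝒳))
      (f := fun x => (tv x - f x) ^ 2) mp1.aemeasurable hasm2
    rw [mp1.map_eq] at h
    exact h.symm
  have hnorm : ∀ ψ : Lp ℝ 2 π, ∫ x, (tv x - (ψ : 𝒳 → ℝ) x) ^ 2 ∂π = ‖TV - ψ‖ ^ 2 := by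
    intro ψ
    have h1 : ((TV - ψ : Lp ℝ 2 π) : 𝒳 → ℝ) =ᵐ[π] fun x => tv x - (ψ : 𝒳 → ℝ) x :=
      Lp.coeFn_sub TV ψ
    have h2 : ‖TV - ψ‖ ^ 2 = ⟪TV - ψ, TV - ψ⟫ := (real_inner_self_eq_norm_sq _).symm
    rw [h2, L2.inner_def]
    refine (integral_congr_ae ?_).symm
    filter_upwards [h1] with x hx
    rw [hx, real_inner_self_eq_norm_sq, Real.norm_eq_abs, sq_abs]
  obtain ⟨hPC, hPmin⟩ := hP TV
  refine ⟨hPC, ?_, ?_⟩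
  · intro φ hφ
    rw [key _ (Lp.memLp (P TV)), key _ (Lp.memLp φ), hnorm, hnorm]
    have h := hPmin φ hφ
    have h2 := pow_le_pow_left₀ (norm_nonneg _) h 2
    linarith
  · intro φ hφ hle
    rw [key _ (Lp.memLp (P TV)), key _ (Lp.memLp φ), hnorm, hnorm] at hle
    have hle2 : ‖TV - φ‖ ^ 2 ≤ ‖TV - P TV‖ ^ 2 := by linarith
    have hle1 : ‖TV - φ‖ ≤ ‖TV - P TV‖ := by
      nlinarith [norm_nonneg (TV - φ), norm_nonneg (TV - P TV)]
    haveI : Nonempty C := hCne.to_subtype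
    have hbdd : BddBelow (Set.range fun w : C => ‖TV - (w : Lp ℝ 2 π)‖) :=
      ⟨0, fun _ ⟨_, h⟩ => h ▸ norm_nonneg _⟩
    have hinf : (⨅ w : C, ‖TV - (w : Lp ℝ 2 π)‖) = ‖TV - P TV‖ :=
      le_antisymm (ciInf_le hbdd ⟨P TV, hPC⟩) (le_ciInf fun w => hPmin w w.2)
    have hφeq : ‖TV - φ‖ = ⨅ w : C, ‖TV - (w : Lp ℝ 2 π)‖ := by
      refine le_antisymm ?_ (ciInf_le hbdd ⟨φ, hφ⟩)
      rw [hinf]; exact hle1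
    have hPeq : ‖TV - P TV‖ = ⨅ w : C, ‖TV - (w : Lp ℝ 2 π)‖ := hinf.symm
    have k1 := (norm_eq_iInf_iff_real_inner_le_zero hCconvex hPC).1 hPeq φ hφ
    have k2 := (norm_eq_iInf_iff_real_inner_le_zero hCconvex hφ).1 hφeq (P TV) hPC
    have hinner : ⟪φ - P TV, φ - P TV⟫ ≤ 0 := by
      have e : (φ - P TV : Lp ℝ 2 π) = (TV - P TV) - (TV - φ) := by abel
      calc ⟪φ - P TV, φ - P TV⟫
          = ⟪TV - P TV, φ - P TV⟫ - ⟪TV - φ, φ - P TV⟫ := by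
            rw [e, inner_sub_left]
        _ ≤ 0 - ⟪TV - φ, φ - P TV⟫ := by linarith
        _ = ⟪TV - φ, P TV - φ⟫ := by
            rw [zero_sub, ← inner_neg_right, neg_sub]
        _ ≤ 0 := k2
    have hz : φ - P TV = 0 := real_inner_self_nonpos.1 hinner
    exact sub_eq_zero.1 hz
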